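/- Let Q be a quiver with no oriented cycles and suppose Q has at least one arrow. For any dimension vector d with all d_i ≥ 1, there is no nonzero element ρ of the path algebra kQ (lying in ε_j·kQ·ε_i for some vertices i,j) that annihilates every representation in rep_Q(d); equivalently, the intersection of the annihilators Ann(W) over all W ∈ rep_Q(d) contains no nonzero element of ε_j·(kQ)·ε_i. -/

import Mathlib

/-- Evaluation of a matrix representation on a path (product of the arrow matrices). -/
def pathMatrix {k : Type*} [Field k] {Q : Type*} [Quiver Q] {d : Q → ℕ}
    (W : ∀ {i j : Q}, (i ⟶ j) → Matrix (Fin (d j)) (Fin (d i)) k) :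
    ∀ {i j : Q}, Quiver.Path i j → Matrix (Fin (d j)) (Fin (d i)) k
  | _, _, Quiver.Path.nil => 1
  | _, _, Quiver.Path.cons p a => (W a) * (pathMatrix W p)

universe u v

/-- The list of arrows (with their endpoints) of a path. -/
def pathArrows {Q : Type u} [Quiver.{v+1} Q] :
    ∀ {a b : Q}, Quiver.Path a b → List ((x : Q) × (y : Q) × (x ⟶ y))
  | _, _, Quiver.Path.nil => []
  | _, _, Quiver.Path.cons p e => ⟨_, _, e⟩ :: pathArrows p

lemma pathArrows_cons {Q : Type u} [Quiver.{v+1} Q] {a b c : Q}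
    (p : Quiver.Path a b) (e : b ⟶ c) :
    pathArrows (p.cons e) = (⟨b, c, e⟩ : (x : Q) × (y : Q) × (x ⟶ y)) :: pathArrows p := by
  simp [pathArrows]

lemma pathMatrix_cons {k : Type*} [Field k] {Q : Type*} [Quiver Q] {d : Q → ℕ}
    (W : ∀ {i j : Q}, (i ⟶ j) → Matrix (Fin (d j)) (Fin (d i)) k)
    {a b c : Q} (p : Quiver.Path a b) (e : b ⟶ c) :
    pathMatrix W (p.cons e) = W e * pathMatrix W p := by
  simp [pathMatrix]

/-- If an arrow occurs in a path, there is a path from its target to the endpoint. -/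
lemma path_from_target {Q : Type u} [Quiver.{v+1} Q] :
    ∀ {a b : Q} (q : Quiver.Path a b) {x y : Q} (e : x ⟶ y),
      (⟨x, y, e⟩ : (x : Q) × (y : Q) × (x ⟶ y)) ∈ pathArrows q → Nonempty (Quiver.Path y b)
  | _, _, Quiver.Path.nil, _, _, _, hm => by simp [pathArrows] at hm
  | _, _, Quiver.Path.cons q f, x, y, e, hm => by
      rw [pathArrows_cons] at hm
      rcases List.mem_cons.1 hm with h | h
      · obtain ⟨rfl, h2⟩ := Sigma.mk.inj_iff.1 h
        obtain ⟨rfl, _⟩ := Sigma.mk.inj_iff.1 (eq_of_heq h2)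
        exact ⟨Quiver.Path.nil⟩
      · exact ⟨(path_from_target q e h).some.cons f⟩

/-- In an acyclic quiver, a path whose arrows are all among the arrows of another path
with the same endpoints equals that path. -/
lemma path_eq_of_arrows_subset {Q : Type u} [Quiver.{v+1} Q]
    (hacyc : ∀ (i : Q) (p : Quiver.Path i i), p.length = 0) {i : Q} :
    ∀ {j : Q} (p w : Quiver.Path i j),
      (∀ s ∈ pathArrows p, s ∈ pathArrows w) → p = w
  | _, Quiver.Path.nil, w, _ => (Quiver.Path.eq_nil_of_length_zero w (hacyc _ w)).symm
  | _, Quiver.Path.cons p e, Quiver.Path.nil, hsub => by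
      have := hacyc _ (Quiver.Path.cons p e)
      simp [Quiver.Path.length] at this
  | _, Quiver.Path.cons (b := c) p e, Quiver.Path.cons (b := c') w e', hsub => by
      have he : (⟨c, _, e⟩ : (x : Q) × (y : Q) × (x ⟶ y)) ∈ pathArrows (Quiver.Path.cons w e') :=
        hsub _ (by rw [pathArrows_cons]; exact List.mem_cons_self)
      rw [pathArrows_cons] at he
      rcases List.mem_cons.1 he with h | h
      · obtain ⟨rfl, h2⟩ := Sigma.mk.inj_iff.1 h
        obtain rfl := eq_of_heq (Sigma.mk.inj_iff.1 (eq_of_heq h2)).2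
        have hp : p = w := by
          apply path_eq_of_arrows_subset hacyc
          intro s hs
          have hmem := hsub s (by rw [pathArrows_cons]; exact List.mem_cons_of_mem _ hs)
          rw [pathArrows_cons] at hmem
          rcases List.mem_cons.1 hmem with h' | h'
          · exfalso
            subst h'
            obtain ⟨q⟩ := path_from_target p e hs
            have := hacyc _ (q.cons e)
            simp [Quiver.Path.length] at this
          · exact h'
        rw [hp]
      · exfalso
        obtain ⟨q⟩ := path_from_target w e h
        have := hacyc _ (q.cons e')
        simp [Quiver.Path.length] at this

/-- Let `Q` be a quiver with no oriented cycles having at least one arrow, and `d` a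
dimension vector with all `d_i ≥ 1`. No nonzero linear combination `ρ` of paths from `i`
to `j` annihilates every representation in `rep_Q(d)`: if `W_ρ = 0` for all
`W ∈ rep_Q(d)`, then `ρ = 0`. -/
theorem stmt10 {k : Type*} [Field k] {Q : Type u} [Quiver.{v+1} Q]
    (hacyc : ∀ (i : Q) (p : Quiver.Path i i), p.length = 0)
    (harrow : ∃ a b : Q, Nonempty (a ⟶ b))
    (d : Q → ℕ) (hd : ∀ i, 1 ≤ d i) {i j : Q} (ρ : Quiver.Path i j →₀ k)
    (h : ∀ W : ∀ (a b : Q), (a ⟶ b) → Matrix (Fin (d b)) (Fin (d a)) k,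
      (ρ.sum fun ω c => c • pathMatrix (fun {a b} e => W a b e) ω) = 0) :
    ρ = 0 := by
  classical
  ext ω₀
  rw [Finsupp.coe_zero, Pi.zero_apply]
  by_contra hne
  set W : ∀ (a b : Q), (a ⟶ b) → Matrix (Fin (d b)) (Fin (d a)) k := fun a b e =>
    if (⟨a, b, e⟩ : (x : Q) × (y : Q) × (x ⟶ y)) ∈ pathArrows ω₀ then
      Matrix.single ⟨0, hd b⟩ ⟨0, hd a⟩ 1 else 0 with hW
  have key : ∀ {b : Q} (p : Quiver.Path i b),
      pathMatrix (fun {a b} e => W a b e) p ⟨0, hd b⟩ ⟨0, hd i⟩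
        = if ∀ s ∈ pathArrows p, s ∈ pathArrows ω₀ then 1 else 0 := by
    intro b p
    induction p with
    | nil => simp [pathMatrix, Matrix.one_apply, pathArrows]
    | cons p e ih =>
      rename_i b' c'
      rw [pathMatrix_cons]
      have hmem : ∀ s, s ∈ pathArrows (p.cons e)
          ↔ s = (⟨b', c', e⟩ : (x : Q) × (y : Q) × (x ⟶ y)) ∨ s ∈ pathArrows p := by
        intro s; rw [pathArrows_cons, List.mem_cons]
      by_cases he : (⟨b', c', e⟩ : (x : Q) × (y : Q) × (x ⟶ y)) ∈ pathArrows ω₀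
      · have hWe : W b' c' e = Matrix.single ⟨0, hd c'⟩ ⟨0, hd b'⟩ 1 := by
          rw [hW]; simp [he]
        rw [hWe, Matrix.mul_apply, Finset.sum_eq_single (⟨0, hd b'⟩ : Fin (d b'))]
        · rw [Matrix.single_apply_same, one_mul, ih]
          refine if_congr ⟨?_, ?_⟩ rfl rfl
          · intro hall s hs
            rcases (hmem s).1 hs with rfl | hs'
            · exact he
            · exact hall s hs'
          · intro hall s hs
            exact hall s ((hmem s).2 (Or.inr hs))
        · intro z _ hz
          rw [Matrix.single_apply_of_ne, zero_mul]
          exact fun hc => hz hc.2.symm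
        · intro hcon; exact absurd (Finset.mem_univ _) hcon
      · have hWe : W b' c' e = 0 := by rw [hW]; simp [he]
        rw [hWe, Matrix.zero_mul, Matrix.zero_apply, eq_comm, if_neg]
        intro hall
        exact he (hall _ ((hmem _).2 (Or.inl rfl)))
  have h0 := congrFun (congrFun (h W) ⟨0, hd j⟩) ⟨0, hd i⟩
  rw [Finsupp.sum] at h0
  have hsum : ∑ ω ∈ ρ.support,
      ρ ω * (if ∀ s ∈ pathArrows ω, s ∈ pathArrows ω₀ then (1 : k) else 0) = 0 := by
    have hterm : ∀ ω ∈ ρ.support,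
        ρ ω * (if ∀ s ∈ pathArrows ω, s ∈ pathArrows ω₀ then (1 : k) else 0)
          = (ρ ω • pathMatrix (fun {a b} e => W a b e) ω) ⟨0, hd j⟩ ⟨0, hd i⟩ := by
      intro ω _
      rw [Matrix.smul_apply, key ω, smul_eq_mul]
    rw [Finset.sum_congr rfl hterm]
    rw [← Matrix.sum_apply]
    rw [Matrix.zero_apply] at h0
    exact h0
  have hone : ∀ ω ∈ ρ.support,
      ρ ω * (if ∀ s ∈ pathArrows ω, s ∈ pathArrows ω₀ then (1 : k) else 0)
        = if ω = ω₀ then ρ ω₀ else 0 := by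
    intro ω _
    by_cases hsub : ∀ s ∈ pathArrows ω, s ∈ pathArrows ω₀
    · have : ω = ω₀ := path_eq_of_arrows_subset hacyc ω ω₀ hsub
      subst this
      simp [hsub]
    · rw [if_neg hsub, mul_zero, if_neg]
      intro hcon; subst hcon; exact hsub fun s hs => hs
  rw [Finset.sum_congr rfl hone] at hsum
  by_cases hω₀ : ω₀ ∈ ρ.support
  · rw [Finset.sum_ite_eq' ρ.support ω₀ (fun _ => ρ ω₀), if_pos hω₀] at hsum
    exact hne hsum
  · exact hne (Finsupp.notMem_support_iff.1 hω₀)
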